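/- Let ξ and η be positive irrational real numbers and m a prime number with ξ·η = m. Suppose the indices (n, k) with n ≥ 1 and k ≥ 1 are connected, i.e. p_{n−1}·P_{k−1} = m·q_{n−1}·Q_{k−1}. Then either 0 ≤ b_n − m·B_k ≤ 2m − 2 or 0 ≤ B_k − m·b_n ≤ 2m − 2; in particular, since b_n ≥ 1 and B_k ≥ 1, the larger of the two connected partial quotients satisfies max(b_n, B_k) ≥ m. -/

import Mathlib

/-- Complete quotients: `cq ξ 0 = ξ`, `cq ξ (n+1) = 1/(cq ξ n - ⌊cq ξ n⌋)`. -/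
noncomputable def cq (ξ : ℝ) : ℕ → ℝ
  | 0 => ξ
  | n + 1 => 1 / (cq ξ n - ⌊cq ξ n⌋)

/-- Partial quotients: `pquot ξ n = b_n = ⌊ξ_n⌋`. -/
noncomputable def pquot (ξ : ℝ) (n : ℕ) : ℤ := ⌊cq ξ n⌋

/-- Convergent numerators, shifted by one: `cnum ξ 0 = p_{-1} = 1`,
`cnum ξ 1 = p_0 = b_0`, and `cnum ξ (n+1) = p_n = b_n p_{n-1} + p_{n-2}`. -/
noncomputable def cnum (ξ : ℝ) : ℕ → ℤ
  | 0 => 1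
  | 1 => pquot ξ 0
  | n + 2 => pquot ξ (n + 1) * cnum ξ (n + 1) + cnum ξ n

/-- Convergent denominators, shifted by one: `cden ξ 0 = q_{-1} = 0`,
`cden ξ 1 = q_0 = 1`, and `cden ξ (n+1) = q_n = b_n q_{n-1} + q_{n-2}`. -/
noncomputable def cden (ξ : ℝ) : ℕ → ℤ
  | 0 => 0
  | 1 => 1
  | n + 2 => pquot ξ (n + 1) * cden ξ (n + 1) + cden ξ n

lemma cnum_rec (ξ : ℝ) (n : ℕ) :
    cnum ξ (n+2) = pquot ξ (n+1) * cnum ξ (n+1) + cnum ξ n := rfl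

lemma cden_rec (ξ : ℝ) (n : ℕ) :
    cden ξ (n+2) = pquot ξ (n+1) * cden ξ (n+1) + cden ξ n := rfl

lemma cq_rec (ξ : ℝ) (n : ℕ) :
    cq ξ (n+1) = 1 / (cq ξ n - (⌊cq ξ n⌋ : ℝ)) := rfl

lemma irr_one_div {x : ℝ} (h : Irrational x) : Irrational (1 / x) := by
  rw [one_div]
  rintro ⟨q, hq⟩
  exact h ⟨q⁻¹, by push_cast; rw [hq, inv_inv]⟩

lemma cq_irr (ξ : ℝ) (h : Irrational ξ) : ∀ n, Irrational (cq ξ n)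
  | 0 => h
  | (n+1) => by
    have h1 := cq_irr ξ h n
    have h2 : Irrational (cq ξ n - (⌊cq ξ n⌋ : ℤ)) := h1.sub_intCast _
    simp only [cq]
    exact_mod_cast irr_one_div h2

lemma cq_gt_one (ξ : ℝ) (h : Irrational ξ) (n : ℕ) : 1 < cq ξ (n+1) := by
  have h1 := cq_irr ξ h n
  have hne : cq ξ n - (⌊cq ξ n⌋ : ℝ) ≠ 0 :=
    sub_ne_zero.mpr (h1.ne_int _)
  have h0 : 0 < cq ξ n - (⌊cq ξ n⌋ : ℝ) :=
    lt_of_le_of_ne (by linarith [Int.floor_le (cq ξ n)]) (Ne.symm hne)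
  have h2 : cq ξ n - (⌊cq ξ n⌋ : ℝ) < 1 := by
    linarith [Int.lt_floor_add_one (cq ξ n)]
  simp only [cq]
  rw [lt_div_iff₀ h0, one_mul]
  exact h2

lemma pquot_ge_one (ξ : ℝ) (h : Irrational ξ) (n : ℕ) : 1 ≤ pquot ξ (n+1) :=
  Int.le_floor.mpr (by exact_mod_cast (cq_gt_one ξ h n).le)

lemma pquot_zero_nonneg (ξ : ℝ) (h : 0 < ξ) : 0 ≤ pquot ξ 0 :=
  Int.floor_nonneg.mpr h.le

lemma cnum_nonneg (ξ : ℝ) (hp : 0 < ξ) (h : Irrational ξ) : ∀ n, 0 ≤ cnum ξ n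
  | 0 => by simp [cnum]
  | 1 => by simpa [cnum] using pquot_zero_nonneg ξ hp
  | (n+2) => by
    have h1 := cnum_nonneg ξ hp h (n+1)
    have h2 := cnum_nonneg ξ hp h n
    have h3 := pquot_ge_one ξ h n
    simp only [cnum]
    nlinarith

lemma cnum_ge_one (ξ : ℝ) (hp : 0 < ξ) (h : Irrational ξ) : ∀ n, 1 ≤ cnum ξ (n+2)
  | 0 => by
    have h1 := pquot_ge_one ξ h 0
    have h2 := pquot_zero_nonneg ξ hp
    simp only [cnum]
    nlinarith
  | (n+1) => by
    have h1 := cnum_ge_one ξ hp h n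
    have h2 := cnum_nonneg ξ hp h (n+1)
    have h3 := pquot_ge_one ξ h (n+1)
    rw [cnum_rec]
    nlinarith

lemma cnum_mono (ξ : ℝ) (hp : 0 < ξ) (h : Irrational ξ) (n : ℕ) :
    cnum ξ (n+1) ≤ cnum ξ (n+2) := by
  have h1 := cnum_nonneg ξ hp h (n+1)
  have h2 := cnum_nonneg ξ hp h n
  have h3 := pquot_ge_one ξ h n
  simp only [cnum]
  nlinarith

lemma cden_nonneg (ξ : ℝ) (h : Irrational ξ) : ∀ n, 0 ≤ cden ξ n
  | 0 => by simp [cden]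
  | 1 => by simp [cden]
  | (n+2) => by
    have h1 := cden_nonneg ξ h (n+1)
    have h2 := cden_nonneg ξ h n
    have h3 := pquot_ge_one ξ h n
    simp only [cden]
    nlinarith

lemma cden_ge_one (ξ : ℝ) (h : Irrational ξ) : ∀ n, 1 ≤ cden ξ (n+1)
  | 0 => by simp [cden]
  | (n+1) => by
    have h1 := cden_ge_one ξ h n
    have h2 := cden_nonneg ξ h n
    have h3 := pquot_ge_one ξ h n
    simp only [cden]
    nlinarith

lemma cden_mono (ξ : ℝ) (h : Irrational ξ) : ∀ n, cden ξ n ≤ cden ξ (n+1)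
  | 0 => by simp [cden]
  | (n+1) => by
    have h1 := cden_ge_one ξ h n
    have h2 := cden_nonneg ξ h n
    have h3 := pquot_ge_one ξ h n
    simp only [cden]
    nlinarith

lemma det (ξ : ℝ) : ∀ n, cnum ξ n * cden ξ (n+1) - cnum ξ (n+1) * cden ξ n = (-1)^n
  | 0 => by simp [cnum, cden]
  | (n+1) => by
    have h1 := det ξ n
    simp only [cnum, cden]
    linear_combination (-1 : ℤ) * h1

lemma cop (ξ : ℝ) (n : ℕ) : IsCoprime (cnum ξ (n+1)) (cden ξ (n+1)) := by
  have hss : (-1:ℤ)^n * (-1:ℤ)^n = 1 := by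
    rw [← pow_add]; exact Even.neg_one_pow ⟨n, rfl⟩
  exact ⟨-(-1:ℤ)^n * cden ξ n, (-1:ℤ)^n * cnum ξ n, by
    linear_combination (-1:ℤ)^n * det ξ n + hss⟩

lemma ident (ξ : ℝ) (h : Irrational ξ) : ∀ n,
    ξ * ((cden ξ (n+1) : ℝ) * cq ξ (n+1) + (cden ξ n : ℝ)) =
      (cnum ξ (n+1) : ℝ) * cq ξ (n+1) + (cnum ξ n : ℝ)
  | 0 => by
    have hne : cq ξ 0 - (⌊cq ξ 0⌋ : ℝ) ≠ 0 :=
      sub_ne_zero.mpr ((cq_irr ξ h 0).ne_int _)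
    have hfrac : (cq ξ 0 - (⌊cq ξ 0⌋ : ℝ)) * cq ξ 1 = 1 := by
      rw [cq_rec]; exact mul_one_div_cancel hne
    have h0 : cq ξ 0 = ξ := rfl
    rw [h0] at hfrac
    show ξ * ((cden ξ 1 : ℝ) * cq ξ 1 + (cden ξ 0 : ℝ)) =
      (cnum ξ 1 : ℝ) * cq ξ 1 + (cnum ξ 0 : ℝ)
    simp only [cnum, cden, pquot, h0]
    push_cast
    linear_combination hfrac
  | (n+1) => by
    have IH := ident ξ h n
    have hx : 1 < cq ξ (n+2) := cq_gt_one ξ h (n+1)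
    have hfrac : (cq ξ (n+1) - (pquot ξ (n+1) : ℝ)) * cq ξ (n+2) = 1 := by
      have hne : cq ξ (n+1) - (⌊cq ξ (n+1)⌋ : ℝ) ≠ 0 :=
        sub_ne_zero.mpr ((cq_irr ξ h (n+1)).ne_int _)
      show (cq ξ (n+1) - (⌊cq ξ (n+1)⌋ : ℝ)) * cq ξ (n+2) = 1
      rw [cq_rec ξ (n+1)]
      exact mul_one_div_cancel hne
    simp only [cnum, cden]
    push_cast
    linear_combination (cq ξ (n+2)) * IH +
      ((cnum ξ (n+1) : ℝ) - ξ * (cden ξ (n+1) : ℝ)) * hfrac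

lemma esign (ξ : ℝ) (h : Irrational ξ) : ∀ n,
    0 < (-1:ℝ)^n * ((cnum ξ n : ℝ) - ξ * (cden ξ n : ℝ))
  | 0 => by simp [cnum, cden]
  | (n+1) => by
    have IH := esign ξ h n
    have I := ident ξ h n
    have hx : 1 < cq ξ (n+1) := cq_gt_one ξ h n
    have he' : cq ξ (n+1) * ((cnum ξ (n+1) : ℝ) - ξ * (cden ξ (n+1) : ℝ)) =
        -((cnum ξ n : ℝ) - ξ * (cden ξ n : ℝ)) := by linear_combination -I
    have h3 : cq ξ (n+1) * ((-1:ℝ)^n * ((cnum ξ (n+1) : ℝ) - ξ * (cden ξ (n+1) : ℝ))) =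
        -((-1:ℝ)^n * ((cnum ξ n : ℝ) - ξ * (cden ξ n : ℝ))) := by
      linear_combination ((-1:ℝ)^n) * he'
    have h4 : cq ξ (n+1) * ((-1:ℝ)^n * ((cnum ξ (n+1) : ℝ) - ξ * (cden ξ (n+1) : ℝ))) < 0 := by
      rw [h3]; linarith
    have h5 : (-1:ℝ)^n * ((cnum ξ (n+1) : ℝ) - ξ * (cden ξ (n+1) : ℝ)) < 0 := by
      nlinarith
    have h6 : (-1:ℝ)^(n+1) * ((cnum ξ (n+1) : ℝ) - ξ * (cden ξ (n+1) : ℝ)) =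
        -((-1:ℝ)^n * ((cnum ξ (n+1) : ℝ) - ξ * (cden ξ (n+1) : ℝ))) := by ring
    rw [h6]; linarith

set_option maxHeartbeats 1000000 in
lemma key (ξ η : ℝ) (m : ℕ) (hξpos : 0 < ξ) (hηpos : 0 < η)
    (hξirr : Irrational ξ) (hηirr : Irrational η) (hmprime : Nat.Prime m)
    (hmul : ξ * η = m) (n k : ℕ)
    (hp : cnum ξ (n+1) = (m : ℤ) * cden η (k+1))
    (hP : cnum η (k+1) = cden ξ (n+1)) :
    (0 ≤ pquot η (k+1) - (m : ℤ) * pquot ξ (n+1) ∧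
      pquot η (k+1) - (m : ℤ) * pquot ξ (n+1) ≤ 2 * (m : ℤ) - 2) ∧
    (m : ℤ) ≤ pquot η (k+1) := by
  have hm2 : (2:ℤ) ≤ (m:ℤ) := by exact_mod_cast hmprime.two_le
  have hm2R : (2:ℝ) ≤ (m:ℝ) := by exact_mod_cast hmprime.two_le
  -- real versions of case hypotheses
  have hpR : ((cnum ξ (n+1) : ℤ) : ℝ) = (m:ℝ) * ((cden η (k+1) : ℤ) : ℝ) := by
    exact_mod_cast congrArg (fun z : ℤ => (z : ℝ)) hp
  have hPR : ((cnum η (k+1) : ℤ) : ℝ) = ((cden ξ (n+1) : ℤ) : ℝ) := by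
    exact_mod_cast congrArg (fun z : ℤ => (z : ℝ)) hP
  have Iξ := ident ξ hξirr n
  have Iη := ident η hηirr k
  have sξ := esign ξ hξirr (n+1)
  have sη := esign η hηirr (k+1)
  set x := cq ξ (n+1) with hxdef
  set y := cq η (k+1) with hydef
  set e : ℝ := (cnum ξ (n+1) : ℝ) - ξ * (cden ξ (n+1) : ℝ) with hedef
  set E : ℝ := (cnum η (k+1) : ℝ) - η * (cden η (k+1) : ℝ) with hEdef
  have hE : E * ξ = -e := by
    rw [hEdef, hedef]
    linear_combination ξ * hPR + hpR - ((cden η (k+1) : ℤ) : ℝ) * hmul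
  have hene : e ≠ 0 := by
    intro h0
    rw [h0, mul_zero] at sξ
    exact lt_irrefl 0 sξ
  have hEe : E * e < 0 := by
    have h1 : E * e * ξ = -(e*e) := by linear_combination e * hE
    nlinarith [mul_self_pos.mpr hene, hξpos]
  have hparZ : (-1:ℤ)^(k+1) = -(-1:ℤ)^(n+1) := by
    rcases Nat.even_or_odd (n+1) with hN | hN <;>
      rcases Nat.even_or_odd (k+1) with hK | hK
    · exfalso
      rw [hN.neg_one_pow, one_mul] at sξ
      rw [hK.neg_one_pow, one_mul] at sη
      nlinarith
    · rw [hK.neg_one_pow, hN.neg_one_pow]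
    · rw [hK.neg_one_pow, hN.neg_one_pow]; norm_num
    · exfalso
      rw [hN.neg_one_pow] at sξ
      rw [hK.neg_one_pow] at sη
      nlinarith
  have DξZ := det ξ n
  have DηZ := det η k
  have DξR : ((cnum ξ n : ℤ):ℝ) * ((cden ξ (n+1) : ℤ):ℝ) -
      ((cnum ξ (n+1) : ℤ):ℝ) * ((cden ξ n : ℤ):ℝ) = (-1:ℝ)^n := by
    exact_mod_cast congrArg (fun z : ℤ => (z : ℝ)) DξZ
  have DηR : ((cnum η k : ℤ):ℝ) * ((cden η (k+1) : ℤ):ℝ) -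
      ((cnum η (k+1) : ℤ):ℝ) * ((cden η k : ℤ):ℝ) = (-1:ℝ)^k := by
    exact_mod_cast congrArg (fun z : ℤ => (z : ℝ)) DηZ
  have hparR : (-1:ℝ)^(k+1) = -(-1:ℝ)^(n+1) := by
    exact_mod_cast congrArg (fun z : ℤ => (z : ℝ)) hparZ
  have h1 : (((cden ξ (n+1) : ℤ):ℝ) * x + ((cden ξ n : ℤ):ℝ)) * e = (-1:ℝ)^(n+1) := by
    rw [hedef]
    linear_combination (-((cden ξ (n+1) : ℤ):ℝ)) * Iξ - DξR
  have h2 : (((cden η (k+1) : ℤ):ℝ) * y + ((cden η k : ℤ):ℝ)) * E = (-1:ℝ)^(k+1) := by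
    rw [hEdef]
    linear_combination (-((cden η (k+1) : ℤ):ℝ)) * Iη - DηR
  have h3 : (((cden η (k+1) : ℤ):ℝ) * y + ((cden η k : ℤ):ℝ)) * e =
      (ξ * (((cden ξ (n+1) : ℤ):ℝ) * x + ((cden ξ n : ℤ):ℝ))) * e := by
    linear_combination (((cden η (k+1) : ℤ):ℝ) * y + ((cden η k : ℤ):ℝ)) * hE -
      ξ * h2 - ξ * hparR - ξ * h1
  have hxi := mul_right_cancel₀ hene h3
  have hkeyR : ((cden η (k+1) : ℤ):ℝ) * y + ((cden η k : ℤ):ℝ) =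
      (m:ℝ) * ((cden η (k+1) : ℤ):ℝ) * x + ((cnum ξ n : ℤ):ℝ) := by
    linear_combination hxi + Iξ + x * hpR
  -- the integer c
  set t : ℤ := (-1:ℤ)^(n+1) with htdef
  have htt : t * t = 1 := by
    rw [htdef, ← pow_add]; exact Even.neg_one_pow ⟨n+1, rfl⟩
  have DξZ' : cnum ξ n * cden ξ (n+1) - cnum ξ (n+1) * cden ξ n = -t := by
    rw [htdef]; rw [DξZ]; ring
  have DηZ' : cnum η k * cden η (k+1) - cnum η (k+1) * cden η k = t := by
    rw [DηZ]
    have h := hparZ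
    rw [pow_succ] at h
    linarith
  set c : ℤ := t * (cnum ξ n * cnum η k - (m:ℤ) * (cden ξ n * cden η k)) with hcdef
  have hc : cnum ξ n - cden η k = cden η (k+1) * c := by
    rw [hcdef]
    linear_combination (-t * cnum ξ n) * DηZ' + (-t * cnum ξ n * cden η k) * hP +
      (-t * cden η k) * DξZ' + (-t * cden ξ n * cden η k) * hp +
      (cden η k - cnum ξ n) * htt
  -- integer bounds
  have hQ1 : 1 ≤ cden η (k+1) := cden_ge_one η hηirr k
  have hQ1nn : 0 ≤ cden η k := cden_nonneg η hηirr k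
  have hQle : cden η k ≤ cden η (k+1) := cden_mono η hηirr k
  have hp1nn : 0 ≤ cnum ξ n := cnum_nonneg ξ hξpos hξirr n
  have hple : cnum ξ n ≤ (m:ℤ) * cden η (k+1) := by
    rw [← hp]
    cases n with
    | zero =>
      have h1 : cnum ξ 0 = 1 := rfl
      have h2 : 1 ≤ (m:ℤ) * cden η (k+1) := by nlinarith
      rw [h1, hp]; exact h2
    | succ j => exact cnum_mono ξ hξpos hξirr j
  have hc1 : -1 ≤ c := by
    by_contra hcon
    push_neg at hcon
    have h4 : c ≤ -2 := by omega
    have h5 : cden η (k+1) * c ≤ cden η (k+1) * (-2) :=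
      mul_le_mul_of_nonneg_left h4 (by omega)
    linarith [hc]
  have hcne : c ≠ -1 := by
    intro hcm1
    rw [hcm1, mul_neg_one] at hc
    have hp10 : cnum ξ n = 0 := by omega
    cases n with
    | zero => simp [cnum] at hp10
    | succ j =>
      cases j with
      | zero =>
        have h1 : cnum ξ 2 = pquot ξ 1 * cnum ξ 1 + cnum ξ 0 := cnum_rec ξ 0
        have h2 : cnum ξ 0 = 1 := rfl
        rw [hp10, mul_zero, h2] at h1
        rw [h1] at hp
        nlinarith
      | succ i =>
        have h9 : (1:ℤ) ≤ cnum ξ (i+1+1) := cnum_ge_one ξ hξpos hξirr i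
        omega
  have hc0 : 0 ≤ c := by omega
  have hcm : c ≤ (m:ℤ) := by
    by_contra hcon
    push_neg at hcon
    have h4 : (m:ℤ) + 1 ≤ c := by omega
    have h5 : cden η (k+1) * ((m:ℤ)+1) ≤ cden η (k+1) * c :=
      mul_le_mul_of_nonneg_left h4 (by omega)
    nlinarith [hc, hple, hQ1nn, hQ1]
  have hcnem : c ≠ (m:ℤ) := by
    intro hcm1
    rw [hcm1] at hc
    have hQ10 : cden η k = 0 := by nlinarith [hc, hple]
    have hp1eq : cnum ξ n = (m:ℤ) * cden η (k+1) := by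
      rw [mul_comm] at hc; omega
    have hk0 : k = 0 := by
      cases k with
      | zero => rfl
      | succ j => exact absurd hQ10 (by have := cden_ge_one η hηirr j; omega)
    subst hk0
    have hQval : cden η 1 = 1 := rfl
    rw [hQval, mul_one] at hp1eq
    have hpval : cnum ξ (n+1) = (m:ℤ) := by rw [hp, hQval, mul_one]
    cases n with
    | zero =>
      have : cnum ξ 0 = 1 := rfl
      rw [this] at hp1eq; omega
    | succ j =>
      have hrec : cnum ξ (j+2) = pquot ξ (j+1) * cnum ξ (j+1) + cnum ξ j :=
        cnum_rec ξ j
      have hb1 : 1 ≤ pquot ξ (j+1) := pquot_ge_one ξ hξirr j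
      have hjnn : 0 ≤ cnum ξ j := cnum_nonneg ξ hξpos hξirr j
      have hj1nn : 0 ≤ cnum ξ (j+1) := cnum_nonneg ξ hξpos hξirr (j+1)
      rw [hpval, hp1eq] at hrec
      have hb1' : pquot ξ (j+1) = 1 := by nlinarith
      rw [hb1', one_mul] at hrec
      have hj0 : cnum ξ j = 0 := by omega
      cases j with
      | zero => simp [cnum] at hj0
      | succ i =>
        cases i with
        | zero =>
          have h1 : cnum ξ 2 = pquot ξ 1 * cnum ξ 1 + cnum ξ 0 := cnum_rec ξ 0
          have h2 : cnum ξ 0 = 1 := rfl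
          rw [hj0, mul_zero, h2] at h1
          rw [h1] at hp1eq
          omega
        | succ l =>
          have h9 : (1:ℤ) ≤ cnum ξ (l+1+1) := cnum_ge_one ξ hξpos hξirr l
          omega
  have hcm1 : c ≤ (m:ℤ) - 1 := by omega
  -- back to reals
  have hyx : y = (m:ℝ) * x + (c:ℝ) := by
    have hcR : ((cnum ξ n : ℤ):ℝ) - ((cden η k : ℤ):ℝ) =
        ((cden η (k+1) : ℤ):ℝ) * (c:ℝ) := by exact_mod_cast hc
    have hQR : (0:ℝ) < ((cden η (k+1) : ℤ):ℝ) := by exact_mod_cast (by omega : (0:ℤ) < cden η (k+1))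
    have h0 : ((cden η (k+1) : ℤ):ℝ) * (y - ((m:ℝ) * x + (c:ℝ))) = 0 := by
      linear_combination hkeyR + hcR
    rcases mul_eq_zero.mp h0 with h | h
    · exact absurd h (ne_of_gt hQR)
    · linarith
  -- floors
  have hBk : pquot η (k+1) = ⌊(m:ℝ) * x⌋ + c := by
    show ⌊cq η (k+1)⌋ = _
    rw [← hydef, hyx, Int.floor_add_intCast]
  have hbn1 : 1 ≤ pquot ξ (n+1) := pquot_ge_one ξ hξirr n
  have hxlow : ((pquot ξ (n+1) : ℤ):ℝ) < x :=
    lt_of_le_of_ne (Int.floor_le x) (Ne.symm ((cq_irr ξ hξirr (n+1)).ne_int _))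
  have hxhigh : x < ((pquot ξ (n+1) : ℤ):ℝ) + 1 := Int.lt_floor_add_one x
  have hfl1 : (m:ℤ) * pquot ξ (n+1) ≤ ⌊(m:ℝ) * x⌋ := by
    apply Int.le_floor.mpr
    push_cast
    nlinarith
  have hfl2 : ⌊(m:ℝ) * x⌋ ≤ (m:ℤ) * pquot ξ (n+1) + (m:ℤ) - 1 := by
    have h0 : ⌊(m:ℝ) * x⌋ < (m:ℤ) * pquot ξ (n+1) + (m:ℤ) := by
      apply Int.floor_lt.mpr
      push_cast
      nlinarith
    omega
  have hmbn : (m:ℤ) * 1 ≤ (m:ℤ) * pquot ξ (n+1) :=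
    mul_le_mul_of_nonneg_left hbn1 (by omega)
  refine ⟨⟨?_, ?_⟩, ?_⟩
  · rw [hBk]; linarith
  · rw [hBk]; linarith
  · rw [hBk]; linarith


set_option maxHeartbeats 1000000 in
/-- Corollary 2.7: for prime `m` and a connected pair `(n,k)`, either
`0 ≤ b_n - m·B_k ≤ 2m - 2` or `0 ≤ B_k - m·b_n ≤ 2m - 2`; in particular the
larger of the two connected partial quotients is at least `m`. -/
theorem connected_prime_ratio
    (ξ η : ℝ) (m : ℕ) (hξpos : 0 < ξ) (hηpos : 0 < η)
    (hξirr : Irrational ξ) (hηirr : Irrational η) (hmprime : Nat.Prime m)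
    (hmul : ξ * η = m) (n k : ℕ) (hn : 1 ≤ n) (hk : 1 ≤ k)
    (hconn : cnum ξ n * cnum η k = (m : ℤ) * cden ξ n * cden η k) :
    ((0 ≤ pquot ξ n - (m : ℤ) * pquot η k ∧
        pquot ξ n - (m : ℤ) * pquot η k ≤ 2 * (m : ℤ) - 2) ∨
     (0 ≤ pquot η k - (m : ℤ) * pquot ξ n ∧
        pquot η k - (m : ℤ) * pquot ξ n ≤ 2 * (m : ℤ) - 2)) ∧
    (m : ℤ) ≤ max (pquot ξ n) (pquot η k) := by
  obtain ⟨n, rfl⟩ : ∃ j, n = j + 1 := ⟨n - 1, by omega⟩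
  obtain ⟨k, rfl⟩ : ∃ j, k = j + 1 := ⟨k - 1, by omega⟩
  have hm2 : (2:ℤ) ≤ (m:ℤ) := by exact_mod_cast hmprime.two_le
  have hq1 : 1 ≤ cden ξ (n+1) := cden_ge_one ξ hξirr n
  have hQ1 : 1 ≤ cden η (k+1) := cden_ge_one η hηirr k
  have hrhs : 0 < (m:ℤ) * cden ξ (n+1) * cden η (k+1) := by
    have h1 : (0:ℤ) < m := by omega
    have h2 : (0:ℤ) < cden ξ (n+1) := by omega
    have h3 : (0:ℤ) < cden η (k+1) := by omega
    positivity
  have hpPpos : 0 < cnum ξ (n+1) * cnum η (k+1) := hconn ▸ hrhs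
  have hppos : 0 < cnum ξ (n+1) := by
    rcases (cnum_nonneg ξ hξpos hξirr (n+1)).lt_or_eq with h | h
    · exact h
    · rw [← h, zero_mul] at hpPpos; exact absurd hpPpos (lt_irrefl 0)
  have hPpos : 0 < cnum η (k+1) := by
    rcases (cnum_nonneg η hηpos hηirr (k+1)).lt_or_eq with h | h
    · exact h
    · rw [← h, mul_zero] at hpPpos; exact absurd hpPpos (lt_irrefl 0)
  have hd1 : cden η (k+1) ∣ cnum ξ (n+1) := by
    have hd : cden η (k+1) ∣ cnum ξ (n+1) * cnum η (k+1) :=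
      ⟨(m:ℤ) * cden ξ (n+1), by linear_combination hconn⟩
    exact (cop η k).symm.dvd_of_dvd_mul_right hd
  obtain ⟨a, ha⟩ := hd1
  have hd2 : cden ξ (n+1) ∣ cnum η (k+1) := by
    have hd : cden ξ (n+1) ∣ cnum η (k+1) * cnum ξ (n+1) :=
      ⟨(m:ℤ) * cden η (k+1), by linear_combination hconn⟩
    exact (cop ξ n).symm.dvd_of_dvd_mul_right hd
  obtain ⟨b, hb⟩ := hd2
  have hab : a * b = (m:ℤ) := by
    have hne : cden ξ (n+1) * cden η (k+1) ≠ 0 := by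
      have : (0:ℤ) < cden ξ (n+1) * cden η (k+1) := by nlinarith
      exact ne_of_gt this
    have h0 : cden ξ (n+1) * cden η (k+1) * (a * b) =
        cden ξ (n+1) * cden η (k+1) * (m:ℤ) := by
      linear_combination hconn - cnum ξ (n+1) * hb - (cden ξ (n+1) * b) * ha
    exact mul_left_cancel₀ hne h0
  have ha1 : 1 ≤ a := by
    by_contra hcon
    push_neg at hcon
    have h4 : a ≤ 0 := by omega
    have h5 : cden η (k+1) * a ≤ cden η (k+1) * 0 :=
      mul_le_mul_of_nonneg_left h4 (by omega)
    rw [← ha] at h5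
    omega
  have hb1 : 1 ≤ b := by
    by_contra hcon
    push_neg at hcon
    have h4 : b ≤ 0 := by omega
    have h5 : cden ξ (n+1) * b ≤ cden ξ (n+1) * 0 :=
      mul_le_mul_of_nonneg_left h4 (by omega)
    rw [← hb] at h5
    omega
  lift a to ℕ using (by omega : (0:ℤ) ≤ a) with a' ha'
  have hdvd : a' ∣ m := by
    have : (a' : ℤ) ∣ (m : ℤ) := ⟨b, hab.symm⟩
    exact_mod_cast this
  rcases hmprime.eq_one_or_self_of_dvd a' hdvd with h | h
  · -- a = 1 : cnum ξ = cden η, cnum η = m * cden ξ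
    have ha'' : (a' : ℤ) = 1 := by exact_mod_cast h
    rw [ha'', mul_one] at ha
    have hbm : b = (m:ℤ) := by rw [ha''] at hab; linarith
    rw [hbm] at hb
    have hres := key η ξ m hηpos hξpos hηirr hξirr hmprime
      (by rw [mul_comm]; exact hmul) k n (by rw [hb]; ring) ha
    exact ⟨Or.inl ⟨hres.1.1, hres.1.2⟩, le_trans hres.2 (le_max_left _ _)⟩
  · -- a = m : cnum ξ = m * cden η, cnum η = cden ξ
    have ha'' : (a' : ℤ) = (m:ℤ) := by exact_mod_cast h
    rw [ha''] at ha hab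
    have hbm : b = 1 := by
      have hmne : (m:ℤ) ≠ 0 := by omega
      have : (m:ℤ) * (b - 1) = 0 := by linarith
      rcases mul_eq_zero.mp this with h' | h'
      · exact absurd h' hmne
      · omega
    rw [hbm, mul_one] at hb
    have hres := key ξ η m hξpos hηpos hξirr hηirr hmprime hmul n k
      (by rw [ha]; ring) hb
    exact ⟨Or.inr ⟨hres.1.1, hres.1.2⟩, le_trans hres.2 (le_max_right _ _)⟩
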